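/- Let C be a closed convex subset of a Hilbert space H and f : C × C → ℝ a bifunction satisfying: f(x,x)=0; f monotone (f(x,y)+f(y,x) ≤ 0); for all x,y,z ∈ C, limsup_{t→0⁺} f(tz+(1−t)x, y) ≤ f(x,y); and f(x,·) convex and lower semicontinuous. Then for every r > 0 and x ∈ H there exists z ∈ C such that f(z,y) + (1/r)⟨y − z, z − x⟩ ≥ 0 for all y ∈ C. -/

import Mathlib

open RealInnerProductSpace Filter Topology

namespace RegEq

variable {H : Type*} [NormedAddCommGroup H] [InnerProductSpace ℝ H]

lemma key_id (u v : H) (s t : ℝ) (hst : s + t = 1) :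
    ‖s • u + t • v‖ ^ 2 = s * ‖u‖ ^ 2 + t * ‖v‖ ^ 2 - s * t * ‖u - v‖ ^ 2 := by
  have h1 : ∀ w : H, ‖w‖ ^ 2 = ⟪w, w⟫ := fun w => (real_inner_self_eq_norm_sq w).symm
  rw [h1, h1, h1, h1]
  simp only [inner_add_add_self, inner_sub_sub_self, real_inner_smul_left, real_inner_smul_right]
  rw [real_inner_comm v u]
  have ht : t = 1 - s := by linarith
  subst ht
  ring

lemma comb_sub (a b y : H) (s t : ℝ) (hst : s + t = 1) :
    s • a + t • b - y = s • (a - y) + t • (b - y) := by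
  have h : s • (a - y) + t • (b - y) = s • a + t • b - (s + t) • y := by
    rw [smul_sub, smul_sub, add_smul]; abel
  rw [h, hst, one_smul]

lemma convexOn_normsq (C : Set H) (hconv : Convex ℝ C) (y : H) :
    ConvexOn ℝ C (fun z => ‖z - y‖ ^ 2) := by
  refine ⟨hconv, fun a _ b _ s t hs ht hst => ?_⟩
  dsimp only
  simp only [smul_eq_mul]
  rw [comb_sub a b y s t hst, key_id _ _ s t hst]
  have h2 : (a - y) - (b - y) = a - b := by abel
  rw [h2]
  have := mul_nonneg (mul_nonneg hs ht) (sq_nonneg ‖a - b‖)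
  linarith

variable {H : Type*} [NormedAddCommGroup H] [InnerProductSpace ℝ H]

/-- The regularized bifunction. -/
noncomputable def G (r : ℝ) (x : H) (f : H → H → ℝ) (y z : H) : ℝ :=
  f y z + (1 / r) * ⟪z - y, y - x⟫ + (1 / r) * ‖z - y‖ ^ 2

lemma convexOn_inner_aff (C : Set H) (hconv : Convex ℝ C) (c w : H) (ρ : ℝ) :
    ConvexOn ℝ C (fun z => ρ * ⟪z - w, c⟫) := by
  refine ⟨hconv, fun a _ b _ s t hs ht hst => ?_⟩
  dsimp only
  simp only [smul_eq_mul]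
  rw [comb_sub a b w s t hst, inner_add_left, real_inner_smul_left, real_inner_smul_left]
  ring_nf
  exact le_refl _

lemma convexOn_G (C : Set H) (hconv : Convex ℝ C) {f : H → H → ℝ} {y : H}
    (hf : ConvexOn ℝ C (f y)) (r : ℝ) (hr : 0 < r) (x : H) :
    ConvexOn ℝ C (G r x f y) := by
  have h1 := convexOn_inner_aff C hconv (y - x) y (1 / r)
  have h2 := (convexOn_normsq C hconv y).smul (le_of_lt (by positivity : (0:ℝ) < 1 / r))
  have := (hf.add h1).add h2
  have heq : G r x f y = fun z => (f y z + 1 / r * ⟪z - y, y - x⟫) + (1/r) • ‖z - y‖ ^ 2 := by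
    funext z; simp [G, smul_eq_mul]
  rw [heq]; exact this

/-- midpoint strong convexity inequality for G -/
lemma G_midpoint (C : Set H) (hconv : Convex ℝ C) {f : H → H → ℝ} {y : H}
    (hf : ConvexOn ℝ C (f y)) (r : ℝ) (hr : 0 < r) (x : H)
    {a b : H} (ha : a ∈ C) (hb : b ∈ C) :
    G r x f y ((1/2 : ℝ) • a + (1/2 : ℝ) • b) ≤
      G r x f y a / 2 + G r x f y b / 2 - (1 / (4 * r)) * ‖a - b‖ ^ 2 := by
  have hst : (1/2 : ℝ) + (1/2 : ℝ) = 1 := by norm_num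
  have hfm := hf.2 ha hb (by norm_num : (0:ℝ) ≤ 1/2) (by norm_num : (0:ℝ) ≤ 1/2) hst
  simp only [smul_eq_mul] at hfm
  have hinner : ⟪((1/2 : ℝ) • a + (1/2 : ℝ) • b) - y, y - x⟫
      = (1/2) * ⟪a - y, y - x⟫ + (1/2) * ⟪b - y, y - x⟫ := by
    rw [comb_sub a b y _ _ hst, inner_add_left, real_inner_smul_left, real_inner_smul_left]
  have hnorm : ‖((1/2 : ℝ) • a + (1/2 : ℝ) • b) - y‖ ^ 2
      = (1/2) * ‖a - y‖ ^ 2 + (1/2) * ‖b - y‖ ^ 2 - (1/4) * ‖a - b‖ ^ 2 := by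
    rw [comb_sub a b y _ _ hst, key_id _ _ _ _ hst]
    have h2 : (a - y) - (b - y) = a - b := by abel
    rw [h2]; ring
  have hrr : 0 < 1 / r := by positivity
  simp only [G]
  rw [hinner, hnorm]
  have h4 : (1 / r) * ((1/2) * ‖a - y‖ ^ 2 + (1/2) * ‖b - y‖ ^ 2 - (1/4) * ‖a - b‖ ^ 2)
      = (1/r) * ‖a-y‖^2 / 2 + (1/r) * ‖b-y‖^2 / 2 - (1/(4*r)) * ‖a-b‖^2 := by
    field_simp
  linarith [hfm]


omit [InnerProductSpace ℝ H] in
lemma seq_lsc {C : Set H} {g : H → ℝ} (hg : LowerSemicontinuousOn g C)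
    {z : H} (hz : z ∈ C) {p : ℕ → H} (hp : ∀ n, p n ∈ C)
    (hlim : Filter.Tendsto p atTop (nhds z)) {c : ℝ}
    (hc : ∀ᶠ n in atTop, g (p n) ≤ c) : g z ≤ c := by
  by_contra hlt
  push_neg at hlt
  have hlim' : Filter.Tendsto p atTop (nhdsWithin z C) :=
    tendsto_nhdsWithin_iff.2 ⟨hlim, Eventually.of_forall hp⟩
  have h2 : ∀ᶠ n in atTop, c < g (p n) := hlim'.eventually (hg z hz c hlt)
  obtain ⟨n, h1, h2⟩ := (hc.and h2).exists
  linarith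

/-- existence of a continuous affine minorant for a convex lsc function on a closed convex set -/
lemma exists_minorant {C : Set H} (hcl : IsClosed C) {g : H → ℝ}
    (hg : ConvexOn ℝ C g) (hlsc : LowerSemicontinuousOn g C) {y0 : H} (hy0 : y0 ∈ C) :
    ∃ (ψ : H →L[ℝ] ℝ) (b : ℝ), ∀ z ∈ C, ψ z + b ≤ g z := by
  set K : Set (H × ℝ) := {p | p.1 ∈ C ∧ g p.1 ≤ p.2} with hK
  have hKconv : Convex ℝ K := hg.convex_epigraph
  have hKclosed : IsClosed K := by
    apply IsSeqClosed.isClosed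
    intro q p hq hqp
    have h1 : Filter.Tendsto (fun n => (q n).1) atTop (nhds p.1) :=
      (continuous_fst.tendsto p).comp hqp
    have h2 : Filter.Tendsto (fun n => (q n).2) atTop (nhds p.2) :=
      (continuous_snd.tendsto p).comp hqp
    have hp1 : p.1 ∈ C := hcl.mem_of_tendsto h1 (Eventually.of_forall fun n => (hq n).1)
    refine ⟨hp1, le_of_forall_pos_le_add fun ε hε => ?_⟩
    refine seq_lsc hlsc hp1 (fun n => (hq n).1) h1 ?_
    have hev : ∀ᶠ n in atTop, (q n).2 < p.2 + ε :=
      h2.eventually (eventually_lt_nhds (by linarith))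
    exact hev.mono fun n hn => le_of_lt (lt_of_le_of_lt (hq n).2 hn)
  have hpt : ((y0, g y0 - 1) : H × ℝ) ∉ K := by
    intro h
    have := h.2
    simp only at this
    linarith
  obtain ⟨φ, u, hu1, hu2⟩ := geometric_hahn_banach_point_closed hKconv hKclosed hpt
  set ψ0 : H →L[ℝ] ℝ := φ.comp (ContinuousLinearMap.inl ℝ H ℝ) with hψ0
  set c : ℝ := φ (0, 1) with hc
  have hφ : ∀ (z : H) (t : ℝ), φ (z, t) = ψ0 z + t * c := by
    intro z t
    have : ((z, t) : H × ℝ) = (z, 0) + t • (0, 1) := by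
      simp [Prod.ext_iff]
    rw [this, map_add, map_smul]
    simp [hψ0, smul_eq_mul]
    exact Or.inl hc.symm
  -- c ≥ 0
  have hcnonneg : 0 ≤ c := by
    by_contra hcneg
    push_neg at hcneg
    set t0 : ℝ := (u - 1 - ψ0 y0 - c * g y0) / c with ht0
    set t : ℝ := max t0 0 with ht
    have hmem : ((y0, g y0 + t) : H × ℝ) ∈ K := ⟨hy0, by show g y0 ≤ g y0 + t; linarith [le_max_right t0 0]⟩
    have := hu2 _ hmem
    rw [hφ] at this
    have htt0 : t0 ≤ t := le_max_left _ _
    have h5 : t * c ≤ t0 * c := by nlinarith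
    have h6 : t0 * c = u - 1 - ψ0 y0 - c * g y0 := by rw [ht0, div_mul_cancel₀ _ (ne_of_lt hcneg)]
    nlinarith
  have hcne : c ≠ 0 := by
    intro hc0
    have h7 := hu1
    rw [hφ] at h7
    have h8 := hu2 (y0, g y0) ⟨hy0, le_refl _⟩
    rw [hφ] at h8
    rw [hc0] at h7 h8
    linarith
  have hcpos : 0 < c := lt_of_le_of_ne hcnonneg (Ne.symm hcne)
  refine ⟨-(1/c) • ψ0, u / c, fun z hz => ?_⟩
  have h9 := hu2 (z, g z) ⟨hz, le_refl _⟩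
  rw [hφ] at h9
  simp only [ContinuousLinearMap.coe_smul', Pi.smul_apply, smul_eq_mul, neg_mul]
  have heq : -(1/c * ψ0 z) + u/c = (u - ψ0 z)/c := by field_simp; ring
  rw [heq, div_le_iff₀ hcpos]
  linarith


/-- Existence of minimizers for strongly convex lsc-type functions on closed convex sets,
with a quantitative minimality property. -/
lemma exists_min [CompleteSpace H] {C : Set H} (hcl : IsClosed C) (hconv : Convex ℝ C)
    (hCne : C.Nonempty) {φ : H → ℝ} {κ : ℝ} (hκ : 0 < κ)
    (hsc : ∀ a ∈ C, ∀ b ∈ C, φ ((1/2 : ℝ) • a + (1/2 : ℝ) • b) ≤ φ a / 2 + φ b / 2 - κ * ‖a - b‖ ^ 2)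
    {B : ℝ} (hB : ∀ z ∈ C, B ≤ φ z)
    (hlsc : ∀ z ∈ C, ∀ p : ℕ → H, (∀ n, p n ∈ C) → Filter.Tendsto p atTop (nhds z) →
      ∀ c : ℝ, (∀ᶠ n in atTop, φ (p n) ≤ c) → φ z ≤ c) :
    ∃ z ∈ C, ∀ a ∈ C, φ z ≤ φ a ∧ κ * ‖z - a‖ ^ 2 ≤ (φ a - φ z) / 2 := by
  set S : Set ℝ := φ '' C with hS
  have hSne : S.Nonempty := hCne.image φ
  have hSbdd : BddBelow S := ⟨B, by rintro s ⟨z, hz, rfl⟩; exact hB z hz⟩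
  set μ : ℝ := sInf S with hμ
  have hex : ∀ n : ℕ, ∃ z ∈ C, φ z < μ + 1/(n+1) := by
    intro n
    have h1 : μ < μ + 1/(n+1) := by
      have : (0:ℝ) < 1/(n+1) := by positivity
      linarith
    obtain ⟨s, hs, hs2⟩ := exists_lt_of_csInf_lt hSne h1
    obtain ⟨z, hz, rfl⟩ := hs
    exact ⟨z, hz, hs2⟩
  choose p hpC hpv using hex
  have hμle : ∀ z ∈ C, μ ≤ φ z := fun z hz => csInf_le hSbdd ⟨z, hz, rfl⟩
  -- Cauchy estimate
  have hcau : ∀ m n : ℕ, κ * ‖p m - p n‖ ^ 2 < 1/(m+1)/2 + 1/(n+1)/2 := by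
    intro m n
    have hmid : (1/2 : ℝ) • p m + (1/2 : ℝ) • p n ∈ C :=
      hconv (hpC m) (hpC n) (by norm_num) (by norm_num) (by norm_num)
    have h1 := hμle _ hmid
    have h2 := hsc _ (hpC m) _ (hpC n)
    have h3 := hpv m
    have h4 := hpv n
    linarith
  have hCauchy : CauchySeq p := by
    rw [Metric.cauchySeq_iff]
    intro ε hε
    obtain ⟨N, hN⟩ := exists_nat_gt (1 / (κ * ε ^ 2))
    refine ⟨N, fun m hm n hn => ?_⟩
    have hb : ∀ k : ℕ, N ≤ k → (1:ℝ)/(k+1) < κ * ε ^ 2 := by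
      intro k hk
      have h0 : (0:ℝ) < κ * ε ^ 2 := by positivity
      rw [div_lt_iff₀ (by positivity)]
      have : (1:ℝ) / (κ * ε ^ 2) < N := hN
      rw [div_lt_iff₀ h0] at this
      have hNk : (N:ℝ) ≤ (k:ℝ) := Nat.cast_le.2 hk
      nlinarith
    have h5 := hcau m n
    have h6 := hb m hm
    have h7 := hb n hn
    have h8 : κ * ‖p m - p n‖ ^ 2 < κ * ε ^ 2 := by linarith
    have h9 : ‖p m - p n‖ ^ 2 < ε ^ 2 := by
      exact lt_of_mul_lt_mul_left h8 (le_of_lt hκ)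
    rw [dist_eq_norm]
    exact lt_of_pow_lt_pow_left₀ 2 (le_of_lt hε) h9
  obtain ⟨z, hz⟩ := cauchySeq_tendsto_of_complete hCauchy
  have hzC : z ∈ C := hcl.mem_of_tendsto hz (Eventually.of_forall hpC)
  have hφz : φ z ≤ μ := by
    refine le_of_forall_pos_le_add fun ε hε => ?_
    refine hlsc z hzC p hpC hz (μ + ε) ?_
    obtain ⟨N, hN⟩ := exists_nat_gt (1/ε)
    filter_upwards [eventually_ge_atTop N] with n hn
    have h1 : (1:ℝ)/(n+1) ≤ ε := by
      rw [div_le_iff₀ (by positivity)]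
      rw [div_lt_iff₀ hε] at hN
      have : (N:ℝ) ≤ (n:ℝ) := Nat.cast_le.2 hn
      nlinarith
    have := hpv n
    linarith
  refine ⟨z, hzC, fun a ha => ?_⟩
  have hmid : (1/2 : ℝ) • z + (1/2 : ℝ) • a ∈ C :=
    hconv hzC ha (by norm_num) (by norm_num) (by norm_num)
  have h1 := hμle _ hmid
  have h2 := hsc _ hzC _ ha
  have h3 := hμle _ hzC
  constructor
  · nlinarith [sq_nonneg ‖z - a‖, mul_nonneg (le_of_lt hκ) (sq_nonneg ‖z - a‖)]
  · linarith

/-- Key inequality: the weighted average of `G y (z_w)` at the barycenter `z_w` is `≤ 0`. -/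
lemma key_ineq {C : Set H} (hconv : Convex ℝ C) {f : H → H → ℝ}
    (hA2 : ∀ x ∈ C, ∀ y ∈ C, f x y + f y x ≤ 0)
    (hA4c : ∀ x ∈ C, ConvexOn ℝ C (f x))
    (r : ℝ) (hr : 0 < r) (x : H)
    (T : Finset H) (hTC : ↑T ⊆ C) (w : H → ℝ)
    (hw0 : ∀ y ∈ T, 0 ≤ w y) (hw1 : ∑ y ∈ T, w y = 1) :
    ∑ y ∈ T, w y * G r x f y (∑ y' ∈ T, w y' • y') ≤ 0 := by
  set z : H := ∑ y' ∈ T, w y' • y' with hz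
  have hzC : z ∈ C := hconv.sum_mem hw0 hw1 (fun y hy => hTC hy)
  -- the inner-product part sums to zero
  have hcancel : ∑ y ∈ T, w y * ((1 / r) * ⟪z - y, y - x⟫ + (1 / r) * ‖z - y‖ ^ 2) = 0 := by
    have hterm : ∀ y : H, (1 / r) * ⟪z - y, y - x⟫ + (1 / r) * ‖z - y‖ ^ 2
        = (1 / r) * ⟪z - y, z - x⟫ := by
      intro y
      have : ⟪z - y, z - x⟫ = ⟪z - y, y - x⟫ + ⟪z - y, z - y⟫ := by
        rw [← inner_add_right]
        congr 1
        abel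
      rw [this, real_inner_self_eq_norm_sq]
      ring
    calc ∑ y ∈ T, w y * ((1 / r) * ⟪z - y, y - x⟫ + (1 / r) * ‖z - y‖ ^ 2)
        = ∑ y ∈ T, (1 / r) * ⟪w y • (z - y), z - x⟫ := by
          refine Finset.sum_congr rfl fun y _ => ?_
          rw [hterm y, real_inner_smul_left]; ring
      _ = (1 / r) * ⟪∑ y ∈ T, w y • (z - y), z - x⟫ := by
          rw [← Finset.mul_sum, ← sum_inner]
      _ = 0 := by
          have hsum : ∑ y ∈ T, w y • (z - y) = 0 := by
            have : ∑ y ∈ T, w y • (z - y) = (∑ y ∈ T, w y) • z - ∑ y ∈ T, w y • y := by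
              rw [Finset.sum_smul, ← Finset.sum_sub_distrib]
              exact Finset.sum_congr rfl fun y _ => (smul_sub (w y) z y)
            rw [this, hw1, one_smul, ← hz, sub_self]
          rw [hsum, inner_zero_left]; ring
  -- the f part
  have hf : ∑ y ∈ T, w y * f y z ≤ 0 := by
    have hJ : ∀ y ∈ T, f y z ≤ ∑ y' ∈ T, w y' * f y y' := by
      intro y hy
      have := (hA4c y (hTC hy)).map_sum_le hw0 hw1 (fun y' hy' => hTC hy')
      simpa [smul_eq_mul] using this
    have h1 : ∑ y ∈ T, w y * f y z ≤ ∑ y ∈ T, w y * ∑ y' ∈ T, w y' * f y y' := by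
      refine Finset.sum_le_sum fun y hy => mul_le_mul_of_nonneg_left (hJ y hy) (hw0 y hy)
    refine h1.trans ?_
    have hQ : ∑ y ∈ T, w y * ∑ y' ∈ T, w y' * f y y'
        = ∑ y ∈ T, ∑ y' ∈ T, w y * (w y' * f y y') :=
      Finset.sum_congr rfl fun y _ => Finset.mul_sum _ _ _
    have hswap : ∑ y ∈ T, ∑ y' ∈ T, w y * (w y' * f y y')
        = ∑ y ∈ T, ∑ y' ∈ T, w y' * (w y * f y' y) := Finset.sum_comm
    have h2 : (∑ y ∈ T, ∑ y' ∈ T, w y * (w y' * f y y')) * 2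
        = ∑ y ∈ T, ∑ y' ∈ T, w y * w y' * (f y y' + f y' y) := by
      rw [mul_two]
      nth_rewrite 2 [hswap]
      rw [← Finset.sum_add_distrib]
      refine Finset.sum_congr rfl fun y _ => ?_
      rw [← Finset.sum_add_distrib]
      exact Finset.sum_congr rfl fun y' _ => by ring
    have h3 : ∑ y ∈ T, ∑ y' ∈ T, w y * w y' * (f y y' + f y' y) ≤ 0 := by
      refine Finset.sum_nonpos fun y hy => Finset.sum_nonpos fun y' hy' => ?_
      have hww : 0 ≤ w y * w y' := mul_nonneg (hw0 y hy) (hw0 y' hy')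
      have := mul_le_mul_of_nonneg_left (hA2 y (hTC hy) y' (hTC hy')) hww
      simpa using this
    rw [hQ]
    linarith
  calc ∑ y ∈ T, w y * G r x f y z
      = ∑ y ∈ T, w y * f y z + ∑ y ∈ T, w y * ((1 / r) * ⟪z - y, y - x⟫ + (1 / r) * ‖z - y‖ ^ 2) := by
        rw [← Finset.sum_add_distrib]
        refine Finset.sum_congr rfl fun y _ => ?_
        simp only [G]; ring
    _ ≤ 0 := by rw [hcancel]; linarith
/-- The minimum of the max of the regularized bifunctions is nonpositive (separation argument). -/
lemma min_nonpos {C : Set H} (hconv : Convex ℝ C) {f : H → H → ℝ}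
    (hA2 : ∀ x ∈ C, ∀ y ∈ C, f x y + f y x ≤ 0)
    (hA4c : ∀ x ∈ C, ConvexOn ℝ C (f x))
    (r : ℝ) (hr : 0 < r) (x : H)
    (T : Finset H) (hTne : T.Nonempty) (hTC : ↑T ⊆ C)
    {zb : H} (hzb : zb ∈ C)
    (hmin : ∀ a ∈ C, T.sup' hTne (fun y => G r x f y zb) ≤ T.sup' hTne (fun y => G r x f y a)) :
    T.sup' hTne (fun y => G r x f y zb) ≤ 0 := by
  classical
  by_contra hm'
  push_neg at hm'
  set m : ℝ := T.sup' hTne (fun y => G r x f y zb) with hmdef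
  have hm : 0 < m := hm'
  set ι := {y : H // y ∈ T} with hι
  haveI : Nonempty ι := ⟨⟨hTne.choose, hTne.choose_spec⟩⟩
  set Gf : ι → H → ℝ := fun i z => G r x f i.1 z with hGf
  set A : Set (ι → ℝ) := {v | ∃ z ∈ C, ∀ i, Gf i z ≤ v i} with hA
  set Bs : Set (ι → ℝ) := {v | ∀ i, v i < m} with hBs
  have hiC : ∀ i : ι, (i : H) ∈ C := fun i => hTC i.2
  have hAconv : Convex ℝ A := by
    rintro v ⟨zv, hzv, hv⟩ w ⟨zw, hzw, hw⟩ s t hs ht hst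
    refine ⟨s • zv + t • zw, hconv hzv hzw hs ht hst, fun i => ?_⟩
    have hcg := (convexOn_G C hconv (hA4c _ (hiC i)) r hr x).2 hzv hzw hs ht hst
    simp only [smul_eq_mul] at hcg
    have h1 : s * Gf i zv + t * Gf i zw ≤ s * v i + t * w i :=
      add_le_add (mul_le_mul_of_nonneg_left (hv i) hs) (mul_le_mul_of_nonneg_left (hw i) ht)
    simp only [Pi.add_apply, Pi.smul_apply, smul_eq_mul]
    exact le_trans hcg h1
  have hBconv : Convex ℝ Bs := by
    rintro v hv w hw s t hs ht hst
    intro i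
    simp only [Pi.add_apply, Pi.smul_apply, smul_eq_mul]
    rcases eq_or_lt_of_le hs with h0 | hpos
    · have ht1 : t = 1 := by linarith
      simp [← h0, ht1]
      exact hw i
    · have h1 : s * v i < s * m := (mul_lt_mul_iff_right₀ hpos).2 (hv i)
      have h2 : t * w i ≤ t * m := mul_le_mul_of_nonneg_left (le_of_lt (hw i)) ht
      nlinarith
  have hBopen : IsOpen Bs := by
    have : Bs = ⋂ i : ι, (fun v : ι → ℝ => v i) ⁻¹' (Set.Iio m) := by
      ext v; simp [hBs]
    rw [this]
    exact isOpen_iInter_of_finite fun i => (isOpen_Iio).preimage (continuous_apply i)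
  have hdisj : Disjoint Bs A := by
    rw [Set.disjoint_left]
    rintro v hvB ⟨z, hz, hvz⟩
    have hlt : T.sup' hTne (fun y => G r x f y z) < m := by
      rw [Finset.sup'_lt_iff]
      intro y hy
      exact lt_of_le_of_lt (hvz ⟨y, hy⟩) (hvB ⟨y, hy⟩)
    exact absurd (hmin z hz) (not_le.2 hlt)
  obtain ⟨φ, u, hB1, hA1'⟩ := geometric_hahn_banach_open hBconv hBopen hAconv hdisj
  set e : ι → (ι → ℝ) := fun i j => if j = i then (1:ℝ) else 0 with he
  set lam : ι → ℝ := fun i => φ (e i) with hlam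
  have hrep : ∀ v : ι → ℝ, φ v = ∑ i, v i * lam i := by
    intro v
    have hv : v = ∑ i, v i • e i := by
      funext j
      rw [Finset.sum_apply]
      simp only [Pi.smul_apply, he, smul_eq_mul, mul_ite, mul_one, mul_zero]
      rw [Finset.sum_ite_eq Finset.univ j v]
      simp
    calc φ v = φ (∑ i, v i • e i) := by rw [← hv]
      _ = ∑ i, v i * lam i := by
          rw [map_sum]
          refine Finset.sum_congr rfl fun i _ => ?_
          rw [map_smul]
          simp [hlam, smul_eq_mul]
  set S : ℝ := ∑ i, lam i with hS
  have hlamnn : ∀ i, 0 ≤ lam i := by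
    intro i
    by_contra hneg
    push_neg at hneg
    set t : ℝ := max ((u - (m-1)*S + 1)/(- lam i)) 0 with htdef
    have ht0 : 0 ≤ t := le_max_right _ _
    set w : ι → ℝ := fun j => if j = i then m - 1 - t else m - 1 with hw
    have hwB : w ∈ Bs := by
      intro j
      by_cases h : j = i <;> simp [hw, h] <;> linarith
    have hcalc : φ w = (m-1)*S - t * lam i := by
      rw [hrep w]
      have : ∀ j, w j * lam j = (m-1)*lam j + (if j = i then -(t * lam j) else 0) := by
        intro j
        by_cases h : j = i <;> simp [hw, h] <;> ring
      rw [Finset.sum_congr rfl fun j _ => this j, Finset.sum_add_distrib]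
      rw [Finset.sum_ite_eq' Finset.univ i (fun j => -(t * lam j))]
      simp only [Finset.mem_univ, if_true, hS]
      rw [← Finset.mul_sum]
      ring
    have h2 := hB1 w hwB
    rw [hcalc] at h2
    have h3 : (u - (m-1)*S + 1)/(- lam i) ≤ t := le_max_left _ _
    have h4 : 0 < - lam i := by linarith
    rw [div_le_iff₀ h4] at h3
    nlinarith
  have hSnn : 0 ≤ S := Finset.sum_nonneg fun i _ => hlamnn i
  have hSpos : 0 < S := by
    rcases eq_or_lt_of_le hSnn with h0 | h
    · exfalso
      have hall : ∀ i ∈ Finset.univ, lam i = 0 :=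
        (Finset.sum_eq_zero_iff_of_nonneg (fun i _ => hlamnn i)).1 h0.symm
      have hzero : ∀ v : ι → ℝ, φ v = 0 := by
        intro v; rw [hrep v]
        exact Finset.sum_eq_zero fun i _ => by rw [hall i (Finset.mem_univ i), mul_zero]
      have h5 : u ≤ 0 := by
        have := hA1' (fun i => Gf i zb) ⟨zb, hzb, fun i => le_refl _⟩
        rwa [hzero] at this
      have h6 : (0:ℝ) < u := by
        have := hB1 (fun _ => m - 1) (fun i => by show m - 1 < m; linarith)
        rwa [hzero] at this
      linarith
    · exact h
  have hmS : m * S ≤ u := by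
    by_contra hcon
    push_neg at hcon
    set c : ℝ := (u/S + m)/2 with hc
    have h1 : u / S < m := by
      rw [div_lt_iff₀ hSpos]; linarith
    have h2 : u/S < c := by rw [hc]; linarith
    have h3 : c < m := by rw [hc]; linarith
    have h4 := hB1 (fun _ => c) (fun i => h3)
    rw [hrep] at h4
    have h5 : ∑ i, c * lam i = c * S := by rw [hS, Finset.mul_sum]
    rw [h5] at h4
    rw [div_lt_iff₀ hSpos] at h2
    linarith
  -- the weights
  set wgt : H → ℝ := fun y => if h : y ∈ T then lam ⟨y, h⟩ / S else 0 with hwgt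
  have hw0 : ∀ y ∈ T, 0 ≤ wgt y := by
    intro y hy
    simp only [hwgt, dif_pos hy]
    exact div_nonneg (hlamnn _) (le_of_lt hSpos)
  have hattach : ∀ g : H → ℝ, ∑ y ∈ T, g y = ∑ i : ι, g i.1 := by
    intro g
    rw [← Finset.sum_attach T g, Finset.univ_eq_attach]
  have hw1 : ∑ y ∈ T, wgt y = 1 := by
    rw [hattach wgt]
    have : ∀ i : ι, wgt i.1 = lam i / S := by
      intro i
      simp only [hwgt, dif_pos i.2]
      rfl
    rw [Finset.sum_congr rfl fun i _ => this i, ← Finset.sum_div, ← hS, div_self (ne_of_gt hSpos)]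
  set zlam : H := ∑ y ∈ T, wgt y • y with hzlam
  have hkey := key_ineq hconv hA2 hA4c r hr x T hTC wgt hw0 hw1
  rw [← hzlam] at hkey
  have hzlamC : zlam ∈ C := hconv.sum_mem hw0 hw1 (fun y hy => hTC hy)
  have hvstar := hA1' (fun i => Gf i zlam) ⟨zlam, hzlamC, fun i => le_refl _⟩
  rw [hrep] at hvstar
  have hfinal : ∑ i : ι, Gf i zlam * lam i = S * ∑ y ∈ T, wgt y * G r x f y zlam := by
    rw [hattach (fun y => wgt y * G r x f y zlam), Finset.mul_sum]
    refine Finset.sum_congr rfl fun i _ => ?_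
    simp only [hwgt, dif_pos i.2, hGf]
    field_simp
    ring
  rw [hfinal] at hvstar
  have h8 : S * ∑ y ∈ T, wgt y * G r x f y zlam ≤ 0 :=
    mul_nonpos_of_nonneg_of_nonpos (le_of_lt hSpos) hkey
  nlinarith

lemma G_cont_part (r : ℝ) (x y : H) :
    Continuous (fun z : H => (1 / r) * ⟪z - y, y - x⟫ + (1 / r) * ‖z - y‖ ^ 2) := by
  apply Continuous.add
  · exact continuous_const.mul ((continuous_id.sub continuous_const).inner continuous_const)
  · exact continuous_const.mul (((continuous_id.sub continuous_const).norm).pow 2)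

lemma G_lsc {C : Set H} {f : H → H → ℝ} {y : H}
    (hf : LowerSemicontinuousOn (f y) C) (r : ℝ) (x : H) :
    LowerSemicontinuousOn (G r x f y) C := by
  have h : G r x f y = fun z => f y z + ((1 / r) * ⟪z - y, y - x⟫ + (1 / r) * ‖z - y‖ ^ 2) := by
    funext z; simp only [G]; ring
  rw [h]
  exact hf.add ((G_cont_part r x y).continuousOn.lowerSemicontinuousOn)

/-- Existence of a solution of the strong Minty problem. -/
lemma exists_minty [CompleteSpace H] {C : Set H} (hne : C.Nonempty) (hcl : IsClosed C)
    (hconv : Convex ℝ C) {f : H → H → ℝ}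
    (hA2 : ∀ x ∈ C, ∀ y ∈ C, f x y + f y x ≤ 0)
    (hA4 : ∀ x ∈ C, ConvexOn ℝ C (f x) ∧ LowerSemicontinuousOn (f x) C)
    (r : ℝ) (hr : 0 < r) (x : H) :
    ∃ z ∈ C, ∀ y ∈ C, G r x f y z ≤ 0 := by
  classical
  obtain ⟨y0, hy0⟩ := hne
  obtain ⟨ψ, b, hψ⟩ := exists_minorant hcl (hA4 y0 hy0).1 (hA4 y0 hy0).2 hy0
  set c1 : ℝ := ‖ψ‖ + (1/r) * ‖y0 - x‖ with hc1
  set Bval : ℝ := b - ‖ψ‖ * ‖y0‖ - r/4 * c1^2 with hBvaldef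
  have hB : ∀ z ∈ C, Bval ≤ G r x f y0 z := by
    intro z hz
    set s : ℝ := ‖z - y0‖ with hs
    have hA1' : ψ z + b ≤ f y0 z := hψ z hz
    have hA3 : -(‖ψ‖ * ‖z‖) ≤ ψ z := by
      have h1 : |ψ z| ≤ ‖ψ‖ * ‖z‖ := by
        have := ψ.le_opNorm z
        rwa [Real.norm_eq_abs] at this
      linarith [neg_abs_le (ψ z)]
    have h4 : ‖z‖ ≤ s + ‖y0‖ := by
      calc ‖z‖ = ‖(z - y0) + y0‖ := by rw [sub_add_cancel]
        _ ≤ s + ‖y0‖ := norm_add_le _ _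
    have hA2' : ‖ψ‖ * ‖z‖ ≤ ‖ψ‖ * s + ‖ψ‖ * ‖y0‖ := by
      nlinarith [norm_nonneg ψ]
    have hA4' : -((1/r) * (s * ‖y0 - x‖)) ≤ (1/r) * ⟪z - y0, y0 - x⟫ := by
      have h1 : -(s * ‖y0 - x‖) ≤ ⟪z - y0, y0 - x⟫ := by
        have := abs_real_inner_le_norm (z - y0) (y0 - x)
        linarith [neg_abs_le (⟪z - y0, y0 - x⟫ : ℝ)]
      have h2 := mul_le_mul_of_nonneg_left h1 (le_of_lt (by positivity : (0:ℝ) < 1/r))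
      rwa [mul_neg] at h2
    have hA5 : -(r/4 * c1^2) ≤ (1/r) * s^2 - c1 * s := by
      have h6 := mul_nonneg (le_of_lt (by positivity : (0:ℝ) < 1/r)) (sq_nonneg (s - r*c1/2))
      have h7 : (1/r) * (s - r*c1/2)^2 = (1/r)*s^2 - c1*s + r/4*c1^2 := by
        field_simp
        ring
      linarith [h7 ▸ h6]
    have hA6 : c1 * s = ‖ψ‖ * s + (1/r) * (s * ‖y0 - x‖) := by rw [hc1]; ring
    simp only [G, ← hs]
    linarith
  -- the max functions over finite subsets
  set Θ : Finset H → H → ℝ :=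
    fun T a => (insert y0 T).sup' (Finset.insert_nonempty y0 T) (fun y => G r x f y a) with hΘ
  have hCcoe : ∀ T : Finset H, ↑T ⊆ C → (↑(insert y0 T) : Set H) ⊆ C := by
    intro T hTC
    rw [Finset.coe_insert]
    exact Set.insert_subset hy0 hTC
  -- minimizers exist
  have hsel : ∀ T : Finset H, ↑T ⊆ C →
      ∃ z ∈ C, ∀ a ∈ C, Θ T z ≤ Θ T a ∧ (1/(4*r)) * ‖z - a‖ ^ 2 ≤ (Θ T a - Θ T z) / 2 := by
    intro T hTC
    refine exists_min hcl hconv ⟨y0, hy0⟩ (by positivity) ?_ (B := Bval) ?_ ?_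
    · intro a ha b' hb'
      rw [hΘ]
      refine Finset.sup'_le _ _ fun y hy => ?_
      have hyC : y ∈ C := hCcoe T hTC hy
      refine (G_midpoint C hconv (hA4 y hyC).1 r hr x ha hb').trans ?_
      have l1 := Finset.le_sup' (fun y => G r x f y a) hy
      have l2 := Finset.le_sup' (fun y => G r x f y b') hy
      linarith
    · intro z hz
      refine (hB z hz).trans ?_
      exact Finset.le_sup' (fun y => G r x f y z) (Finset.mem_insert_self y0 T)
    · intro z hz p hp hlim c hc
      rw [hΘ]
      refine Finset.sup'_le _ _ fun y hy => ?_
      refine seq_lsc (G_lsc (hA4 y (hCcoe T hTC hy)).2 r x) hz hp hlim ?_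
      refine hc.mono fun n hn => le_trans ?_ hn
      exact Finset.le_sup' (fun yy => G r x f yy (p n)) hy
  choose! zmin hzminC hzmin using hsel
  set μ : Finset H → ℝ := fun T => Θ T (zmin T) with hμ
  have hμ0 : ∀ T : Finset H, ↑T ⊆ C → μ T ≤ 0 := by
    intro T hTC
    exact min_nonpos hconv hA2 (fun y hy => (hA4 y hy).1) r hr x (insert y0 T)
      (Finset.insert_nonempty y0 T) (hCcoe T hTC) (hzminC T hTC)
      (fun a ha => (hzmin T hTC a ha).1)
  -- quantitative comparison for nested finsets
  have hq : ∀ T U : Finset H, ↑T ⊆ C → ↑U ⊆ C → T ⊆ U →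
      ‖zmin T - zmin U‖ ^ 2 ≤ 2 * r * (μ U - μ T) := by
    intro T U hTC hUC hTU
    have h1 := (hzmin T hTC (zmin U) (hzminC U hUC)).2
    have h2 : Θ T (zmin U) ≤ Θ U (zmin U) :=
      Finset.sup'_mono (fun y => G r x f y (zmin U)) (Finset.insert_subset_insert y0 hTU) _
    have h3 : (1/(4*r)) * ‖zmin T - zmin U‖ ^ 2 ≤ (μ U - μ T) / 2 := by
      refine h1.trans ?_
      have : μ T = Θ T (zmin T) := rfl
      linarith
    have h4 : 0 < (4:ℝ) * r := by linarith
    have h5 : ‖zmin T - zmin U‖^2 = (4*r) * ((1/(4*r)) * ‖zmin T - zmin U‖^2) := by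
      field_simp
    rw [h5]
    calc (4*r) * ((1/(4*r)) * ‖zmin T - zmin U‖^2) ≤ (4*r) * ((μ U - μ T)/2) :=
        mul_le_mul_of_nonneg_left h3 (le_of_lt h4)
      _ = 2*r*(μ U - μ T) := by ring
  set SS : Set ℝ := μ '' {T : Finset H | ↑T ⊆ C} with hSS
  have hSSne : SS.Nonempty := ⟨μ ∅, ⟨∅, by simp, rfl⟩⟩
  have hSSbdd : BddAbove SS := ⟨0, by rintro v ⟨T, hT, rfl⟩; exact hμ0 T hT⟩
  set ms : ℝ := sSup SS with hms
  have hmsle : ∀ T : Finset H, ↑T ⊆ C → μ T ≤ ms := fun T hT => le_csSup hSSbdd ⟨T, hT, rfl⟩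
  have hseq : ∀ n : ℕ, ∃ T : Finset H, ↑T ⊆ C ∧ ms - 1/(n+1) < μ T := by
    intro n
    have h0 : (0:ℝ) < 1/(n+1) := by positivity
    have h1 : ms - 1/(n+1) < ms := by linarith
    obtain ⟨v, ⟨T, hT, rfl⟩, h2⟩ := exists_lt_of_lt_csSup hSSne h1
    exact ⟨T, hT, h2⟩
  choose Tn hTnC hTn using hseq
  have harith : ∀ ε : ℝ, 0 < ε → ∃ N : ℕ, ∀ n : ℕ, N ≤ n → ∀ U : Finset H, ↑U ⊆ C → Tn n ⊆ U →
      dist (zmin (Tn n)) (zmin U) < ε := by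
    intro ε hε
    obtain ⟨N, hN⟩ := exists_nat_gt (2*r/ε^2)
    refine ⟨N, fun n hn U hUC hTU => ?_⟩
    have h1 := hq (Tn n) U (hTnC n) hUC hTU
    have h2 : μ U ≤ ms := hmsle U hUC
    have h3 : ms - 1/(n+1) < μ (Tn n) := hTn n
    have hp : (0:ℝ) < (n:ℝ)+1 := by positivity
    have h4 : ‖zmin (Tn n) - zmin U‖^2 ≤ 2*r*(1/((n:ℝ)+1)) := by nlinarith
    have h5 : 2*r*(1/((n:ℝ)+1)) < ε^2 := by
      have hNn : (N:ℝ) ≤ n := Nat.cast_le.2 hn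
      rw [div_lt_iff₀ (by positivity : (0:ℝ) < ε^2)] at hN
      have h6 : 2*r < ((n:ℝ)+1) * ε^2 := by nlinarith [sq_nonneg ε]
      rw [mul_one_div, div_lt_iff₀ hp]
      linarith
    rw [dist_eq_norm]
    exact lt_of_pow_lt_pow_left₀ 2 (le_of_lt hε) (lt_of_le_of_lt h4 h5)
  have hCauchy : CauchySeq (fun n => zmin (Tn n)) := by
    rw [Metric.cauchySeq_iff]
    intro ε hε
    obtain ⟨N, hN⟩ := harith (ε/2) (by linarith)
    refine ⟨N, fun m hm n hn => ?_⟩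
    set U : Finset H := Tn m ∪ Tn n with hU
    have hUC : ↑U ⊆ C := by
      rw [hU, Finset.coe_union]
      exact Set.union_subset (hTnC m) (hTnC n)
    have h1 := hN m hm U hUC Finset.subset_union_left
    have h2 := hN n hn U hUC Finset.subset_union_right
    calc dist (zmin (Tn m)) (zmin (Tn n))
        ≤ dist (zmin (Tn m)) (zmin U) + dist (zmin U) (zmin (Tn n)) := dist_triangle _ _ _
      _ < ε/2 + ε/2 := by
          rw [dist_comm (zmin U)]
          exact add_lt_add h1 h2
      _ = ε := by ring
  obtain ⟨zstar, hzstar⟩ := cauchySeq_tendsto_of_complete hCauchy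
  have hzstarC : zstar ∈ C :=
    hcl.mem_of_tendsto hzstar (Eventually.of_forall fun n => hzminC _ (hTnC n))
  refine ⟨zstar, hzstarC, fun y hy => ?_⟩
  set V : ℕ → Finset H := fun n => insert y (Tn n) with hV
  have hVC : ∀ n, ↑(V n) ⊆ C := by
    intro n
    rw [hV]
    simp only [Finset.coe_insert]
    exact Set.insert_subset hy (hTnC n)
  have hTV : ∀ n, Tn n ⊆ V n := fun n => Finset.subset_insert y (Tn n)
  have hζlim : Filter.Tendsto (fun n => zmin (V n)) atTop (nhds zstar) := by
    rw [Metric.tendsto_atTop]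
    intro ε hε
    obtain ⟨N1, hN1⟩ := harith (ε/2) (by linarith)
    rw [Metric.tendsto_atTop] at hzstar
    obtain ⟨N2, hN2⟩ := hzstar (ε/2) (by linarith)
    refine ⟨max N1 N2, fun n hn => ?_⟩
    have h1 := hN1 n (le_trans (le_max_left _ _) hn) (V n) (hVC n) (hTV n)
    have h2 := hN2 n (le_trans (le_max_right _ _) hn)
    calc dist (zmin (V n)) zstar
        ≤ dist (zmin (V n)) (zmin (Tn n)) + dist (zmin (Tn n)) zstar := dist_triangle _ _ _
      _ < ε/2 + ε/2 := add_lt_add (by rw [dist_comm]; exact h1) h2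
      _ = ε := by ring
  refine seq_lsc (G_lsc (hA4 y hy).2 r x) hzstarC (fun n => hzminC _ (hVC n)) hζlim ?_
  refine Eventually.of_forall fun n => ?_
  have h1 : G r x f y (zmin (V n)) ≤ Θ (V n) (zmin (V n)) :=
    Finset.le_sup' (fun yy => G r x f yy (zmin (V n)))
      (Finset.mem_insert_of_mem (Finset.mem_insert_self y (Tn n)))
  exact h1.trans (hμ0 (V n) (hVC n))
end RegEq

open RegEq in
/-- Existence of solutions of the regularized equilibrium problem, under
conditions (A1)-(A4) on the bifunction f. -/
theorem regularized_equilibrium_exists {H : Type*} [NormedAddCommGroup H]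
    [InnerProductSpace ℝ H] [CompleteSpace H]
    (C : Set H) (hne : C.Nonempty) (hcl : IsClosed C) (hconv : Convex ℝ C)
    (f : H → H → ℝ)
    (hA1 : ∀ x ∈ C, f x x = 0)
    (hA2 : ∀ x ∈ C, ∀ y ∈ C, f x y + f y x ≤ 0)
    (hA3 : ∀ x ∈ C, ∀ y ∈ C, ∀ z ∈ C,
      Filter.limsup (fun t : ℝ => f (t • z + (1 - t) • x) y) (nhdsWithin 0 (Set.Ioi 0))
        ≤ f x y)
    (hA4 : ∀ x ∈ C, ConvexOn ℝ C (f x) ∧ LowerSemicontinuousOn (f x) C)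
    (r : ℝ) (hr : 0 < r) (x : H) :
    ∃ z ∈ C, ∀ y ∈ C, f z y + (1 / r) * ⟪y - z, z - x⟫ ≥ 0 := by
  obtain ⟨zs, hzsC, hzs⟩ := exists_minty hne hcl hconv hA2 hA4 r hr x
  refine ⟨zs, hzsC, fun y hy => ?_⟩
  set L : ℝ := -((1/r) * ⟪y - zs, zs - x⟫) with hL
  have hkey : L ≤ f zs y := by
    refine le_of_forall_pos_le_add fun ε hε => ?_
    have hlimsup := hA3 zs hzsC y hy y hy
    set Bq : ℝ := ‖zs - y‖^2 with hBq
    set h : ℝ → ℝ :=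
      fun t => ((1 - t)/r) * (⟪zs - y, (t • y + (1 - t) • zs) - x⟫ + t * Bq) with hh
    have hytC : ∀ t : ℝ, t ∈ Set.Ioo (0:ℝ) 1 → (t • y + (1 - t) • zs) ∈ C := fun t ht =>
      hconv hy hzsC (le_of_lt ht.1) (by linarith [ht.2]) (by ring)
    have hev2 : ∀ᶠ t in nhdsWithin (0:ℝ) (Set.Ioi 0), t ∈ Set.Ioo (0:ℝ) 1 :=
      Ioo_mem_nhdsGT_of_mem ⟨le_refl 0, zero_lt_one⟩
    -- pointwise lower bound
    have hlow : ∀ t : ℝ, t ∈ Set.Ioo (0:ℝ) 1 → h t ≤ f (t • y + (1 - t) • zs) y := by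
      intro t ht
      set yt : H := t • y + (1 - t) • zs with hyt
      have hytC' : yt ∈ C := hytC t ht
      have h1t : (0:ℝ) ≤ 1 - t := by linarith [ht.2]
      have h0 : f yt yt = 0 := hA1 yt hytC'
      have hcvx0 := (hA4 yt hytC').1.2 hy hzsC (le_of_lt ht.1) h1t (by ring)
      rw [← hyt, h0] at hcvx0
      simp only [smul_eq_mul] at hcvx0
      -- 0 ≤ t * f yt y + (1-t) * f yt zs
      have hMinty := hzs yt hytC'
      simp only [G] at hMinty
      have hsub : zs - yt = t • (zs - y) := by
        rw [hyt, sub_smul, one_smul, smul_sub]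
        abel
      rw [hsub, real_inner_smul_left, norm_smul, mul_pow, Real.norm_eq_abs, sq_abs] at hMinty
      -- hMinty : f yt zs + (1/r)*(t*⟪zs-y, yt-x⟫) + (1/r)*(t^2*‖zs-y‖^2) ≤ 0
      have hprod := mul_nonpos_of_nonneg_of_nonpos h1t hMinty
      have hht : h t = ((1 - t)/r) * (⟪zs - y, yt - x⟫ + t * Bq) := by
        simp only [hh]
        rfl
      have hbq : ‖zs - y‖^2 = Bq := rfl
      rw [← hbq] at hht
      rw [← mul_le_mul_iff_right₀ ht.1, hht]
      ring_nf at hprod hcvx0 ⊢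
      linarith
    -- limit of h
    have hcont : Continuous h := by
      rw [hh]
      apply Continuous.mul
      · exact (continuous_const.sub continuous_id).div_const r
      · apply Continuous.add
        · exact Continuous.inner continuous_const
            ((((continuous_id.smul continuous_const).add
              ((continuous_const.sub continuous_id).smul continuous_const))).sub continuous_const)
        · exact continuous_id.mul continuous_const
    have hh0 : h 0 = L := by
      rw [hh, hL]
      simp only [zero_smul, one_smul, sub_zero, zero_add, zero_mul, add_zero]
      have : zs - y = -(y - zs) := by abel
      rw [this, inner_neg_left]
      ring
    have htends : Filter.Tendsto h (nhdsWithin (0:ℝ) (Set.Ioi 0)) (nhds L) := by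
      rw [← hh0]
      exact (hcont.tendsto 0).mono_left nhdsWithin_le_nhds
    have hev1 : ∀ᶠ t in nhdsWithin (0:ℝ) (Set.Ioi 0), L - ε < h t :=
      htends.eventually (eventually_gt_nhds (by linarith))
    have hlower : ∀ᶠ t in nhdsWithin (0:ℝ) (Set.Ioi 0),
        L - ε ≤ f (t • y + (1 - t) • zs) y := by
      filter_upwards [hev1, hev2] with t h1 h2
      exact le_trans (le_of_lt h1) (hlow t h2)
    -- eventual upper bound
    have hytlim : Filter.Tendsto (fun t : ℝ => t • y + (1 - t) • zs)
        (nhdsWithin (0:ℝ) (Set.Ioi 0)) (nhdsWithin zs C) := by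
      rw [tendsto_nhdsWithin_iff]
      constructor
      · have hcont2 : Continuous (fun t : ℝ => t • y + (1 - t) • zs) :=
          (continuous_id.smul continuous_const).add
            ((continuous_const.sub continuous_id).smul continuous_const)
        have := (hcont2.tendsto 0).mono_left (nhdsWithin_le_nhds (s := Set.Ioi (0:ℝ)))
        simpa using this
      · exact hev2.mono fun t ht => hytC t ht
    have hupper : ∀ᶠ t in nhdsWithin (0:ℝ) (Set.Ioi 0),
        f (t • y + (1 - t) • zs) y ≤ 1 - f y zs := by
      have hlsc := (hA4 y hy).2 zs hzsC (f y zs - 1) (by linarith)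
      filter_upwards [hytlim.eventually hlsc, hev2] with t h1 h2
      have := hA2 _ (hytC t h2) y hy
      linarith
    -- conclude via limsup
    have hfin : L - ε ≤ Filter.limsup (fun t : ℝ => f (t • y + (1 - t) • zs) y)
        (nhdsWithin (0:ℝ) (Set.Ioi 0)) := by
      rw [Filter.limsup_eq]
      refine le_csInf ⟨1 - f y zs, hupper⟩ fun a ha => ?_
      rw [Set.mem_setOf_eq] at ha
      obtain ⟨t, h1, h2⟩ := (ha.and hlower).exists
      linarith
    linarith
  rw [hL] at hkey
  linarith
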